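/- Let Q be a commutative unital Noetherian local ring and let I ⊆ Q be an ideal generated by each of two lists of m elements, a_1,…,a_m and b_1,…,b_m. Let A = [a_1 … a_m]^T and B = [b_1 … b_m]^T be the corresponding column matrices. Then there is an invertible matrix U ∈ GL(m,Q) with B = U·A. -/

import Mathlib

open Matrix Submodule

/-- Linear algebra over a field: if the rows `v i` of a matrix together with a
subspace `S` span the whole space `k^m`, then the rows can be modified by
elements of `S` to form an invertible matrix. -/
lemma aux_exists_unit_rows {k : Type*} [Field k] {m : ℕ}
    (S : Submodule k (Fin m → k)) (v : Fin m → Fin m → k)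
    (hs : ∀ i : Fin m, Pi.single i 1 ∈ S ⊔ Submodule.span k (Set.range v)) :
    ∃ u : Fin m → Fin m → k, (∀ i, u i - v i ∈ S) ∧ IsUnit (Matrix.of u) := by
  classical
  let q : (Fin m → k) →ₗ[k] (Fin m → k) ⧸ S := S.mkQ
  let L : (Fin m → k) →ₗ[k] (Fin m → k) := Fintype.linearCombination k v
  let G : (Fin m → k) →ₗ[k] (Fin m → k) ⧸ S := q ∘ₗ L
  have hLrange : Submodule.span k (Set.range v) ≤ LinearMap.range L := by
    rw [Submodule.span_le]
    rintro _ ⟨i, rfl⟩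
    exact ⟨Pi.single i 1, by simp [L]⟩
  have key : ∀ i : Fin m, q (Pi.single i 1) ∈ LinearMap.range G := by
    intro i
    obtain ⟨s, hsS, t, htv, hst⟩ := Submodule.mem_sup.1 (hs i)
    obtain ⟨y, hy⟩ := hLrange htv
    refine ⟨y, ?_⟩
    have : q s = 0 := (Submodule.Quotient.mk_eq_zero S).2 hsS
    calc G y = q t := by simp [G, hy]
    _ = q s + q t := by rw [this, zero_add]
    _ = q (Pi.single i 1) := by rw [← map_add, hst]
  have hG : Function.Surjective G := by
    rw [← LinearMap.range_eq_top, eq_top_iff]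
    intro x _
    obtain ⟨y, rfl⟩ := S.mkQ_surjective x
    have hy : y = ∑ i, y i • (Pi.single i 1 : Fin m → k) := by
      funext j
      simp [Finset.sum_apply, Pi.single_apply]
    rw [show S.mkQ y = q y from rfl, hy, map_sum]
    exact Submodule.sum_mem _ fun i _ => by
      rw [LinearMap.map_smul]; exact Submodule.smul_mem _ _ (key i)
  obtain ⟨sG, hsG⟩ := G.exists_rightInverse_of_surjective (LinearMap.range_eq_top.2 hG)
  obtain ⟨sq, hsq⟩ := q.exists_rightInverse_of_surjective
    (LinearMap.range_eq_top.2 S.mkQ_surjective)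
  have hdim : Module.finrank k (LinearMap.ker G) = Module.finrank k (LinearMap.ker q) := by
    have h1 := LinearMap.finrank_range_add_finrank_ker G
    have h2 := LinearMap.finrank_range_add_finrank_ker q
    rw [LinearMap.range_eq_top.2 hG, finrank_top] at h1
    rw [LinearMap.range_eq_top.2 S.mkQ_surjective, finrank_top] at h2
    omega
  let θ : (LinearMap.ker G) ≃ₗ[k] (LinearMap.ker q) := LinearEquiv.ofFinrankEq _ _ hdim
  have hPG : ∀ x : Fin m → k, x - sG (G x) ∈ LinearMap.ker G := by
    intro x
    have hx := LinearMap.ext_iff.1 hsG (G x)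
    simp only [LinearMap.comp_apply, LinearMap.id_apply] at hx
    rw [LinearMap.mem_ker, map_sub, hx, sub_self]
  let PG : (Fin m → k) →ₗ[k] LinearMap.ker G :=
    LinearMap.codRestrict (LinearMap.ker G)
      (LinearMap.id - sG ∘ₗ G)
      (fun x => by simpa [LinearMap.sub_apply] using hPG x)
  let M : (Fin m → k) →ₗ[k] (Fin m → k) := sq ∘ₗ G + (LinearMap.ker q).subtype ∘ₗ θ.toLinearMap ∘ₗ PG
  have hqsq : ∀ z, q (sq z) = z := fun z => LinearMap.ext_iff.1 hsq z
  have hqM : ∀ x, q (M x) = G x := by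
    intro x
    have hker : q ((θ (PG x) : Fin m → k)) = 0 := (θ (PG x)).2
    simp only [M, LinearMap.add_apply, LinearMap.comp_apply, map_add,
      Submodule.coe_subtype, LinearEquiv.coe_coe, hqsq, hker, add_zero]
  have hinj : Function.Injective M := by
    intro x y hxy
    have hsub : M (x - y) = 0 := by rw [map_sub, hxy, sub_self]
    have hGx : G (x - y) = 0 := by rw [← hqM, hsub, map_zero]
    have hPGx : ((PG (x - y) : Fin m → k)) = x - y := by
      simp only [PG, LinearMap.codRestrict_apply, LinearMap.sub_apply,
        LinearMap.id_apply, LinearMap.comp_apply, hGx, map_zero, sub_zero]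
    have hMval : M (x - y) = sq (G (x - y)) + ((θ (PG (x - y)) : Fin m → k)) := rfl
    rw [hGx, map_zero, zero_add] at hMval
    rw [hsub] at hMval
    have hz : θ (PG (x - y)) = 0 := Subtype.ext hMval.symm
    have : PG (x - y) = 0 := θ.injective (by rw [hz, θ.map_zero])
    have : x - y = 0 := by rw [← hPGx, this]; rfl
    exact sub_eq_zero.1 this
  have hbij : Function.Bijective M := ⟨hinj, LinearMap.injective_iff_surjective.1 hinj⟩
  refine ⟨fun i => M (Pi.single i 1), ?_, ?_⟩
  · intro i
    have hLi : L (Pi.single i 1) = v i := by simp [L]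
    have : q (M (Pi.single i 1) - v i) = 0 := by
      rw [map_sub, hqM]
      show q (L (Pi.single i 1)) - q (v i) = 0
      rw [hLi, sub_self]
    rwa [← Submodule.ker_mkQ S, LinearMap.mem_ker]
  · have hMunit : IsUnit (M : Module.End k (Fin m → k)) := (Module.End.isUnit_iff M).2 hbij
    have hmat : IsUnit (LinearMap.toMatrixAlgEquiv' M) :=
      hMunit.map (LinearMap.toMatrixAlgEquiv' : Module.End k (Fin m → k) ≃ₐ[k] Matrix (Fin m) (Fin m) k)
    have heq : Matrix.of (fun i => M (Pi.single i 1)) = (LinearMap.toMatrixAlgEquiv' M)ᵀ := by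
      ext i j
      rw [Matrix.transpose_apply, LinearMap.toMatrixAlgEquiv'_apply]
      rfl
  
    rw [heq, Matrix.isUnit_iff_isUnit_det, Matrix.det_transpose,
      ← Matrix.isUnit_iff_isUnit_det]
    exact hmat

/-- If an ideal of a commutative unital Noetherian local ring `Q` is generated by
each of two lists `a_1,…,a_m` and `b_1,…,b_m` of `m` elements, then there is an
invertible matrix `U ∈ GL(m,Q)` with `b_i = ∑_j U_ij · a_j` for all `i`. -/
theorem exists_invertible_matrix_of_span_eq
    {Q : Type*} [CommRing Q] [IsNoetherianRing Q] [IsLocalRing Q] {m : ℕ}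
    (a b : Fin m → Q) (h : Ideal.span (Set.range a) = Ideal.span (Set.range b)) :
    ∃ U : Matrix (Fin m) (Fin m) Q, IsUnit U ∧ b = U.mulVec a := by
  classical
  -- matrices expressing b in terms of a and vice versa
  have hb : ∀ i, b i ∈ Submodule.span Q (Set.range a) := by
    intro i
    have : b i ∈ Ideal.span (Set.range b) := Ideal.subset_span ⟨i, rfl⟩
    rwa [← h] at this
  have ha : ∀ i, a i ∈ Submodule.span Q (Set.range b) := by
    intro i
    have : a i ∈ Ideal.span (Set.range a) := Ideal.subset_span ⟨i, rfl⟩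
    rwa [h] at this
  choose V hV using fun i => (Submodule.mem_span_range_iff_exists_fun Q).1 (hb i)
  choose W hW using fun i => (Submodule.mem_span_range_iff_exists_fun Q).1 (ha i)
  -- the residue field
  let π : Q →+* IsLocalRing.ResidueField Q := IsLocalRing.residue Q
  haveI : RingHomSurjective π := ⟨IsLocalRing.residue_surjective⟩
  -- the reduction map, semilinear over π
  let p : (Fin m → Q) →ₛₗ[π] (Fin m → IsLocalRing.ResidueField Q) :=
    { toFun := fun x i => π (x i)
      map_add' := fun x y => by funext i; simp
      map_smul' := fun c x => funext fun i => π.map_mul c (x i) }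
  -- the relation module of a, and its image over the residue field
  let K : Submodule Q (Fin m → Q) := LinearMap.ker (Fintype.linearCombination Q a)
  let S := K.map p
  let vbar : Fin m → (Fin m → IsLocalRing.ResidueField Q) := fun i => p (V i)
  have hs : ∀ i : Fin m, Pi.single i 1 ∈
      S ⊔ Submodule.span (IsLocalRing.ResidueField Q) (Set.range vbar) := by
    intro i
    -- the relation: e_i - (row i of W*V) kills a
    set c : Fin m → Q := fun j => (Pi.single i 1 : Fin m → Q) j - ∑ l, W i l * V l j with hc
    have hcK : c ∈ K := by
      show Fintype.linearCombination Q a c = 0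
      rw [Fintype.linearCombination_apply]
      have h1 : ∑ j, ((Pi.single i 1 : Fin m → Q) j - ∑ l, W i l * V l j) • a j
          = (∑ j, (Pi.single i 1 : Fin m → Q) j • a j) - ∑ j, (∑ l, W i l * V l j) • a j := by
        rw [← Finset.sum_sub_distrib]
        exact Finset.sum_congr rfl fun j _ => by rw [sub_smul]
      have h2 : ∑ j, (Pi.single i 1 : Fin m → Q) j • a j = a i := by
        simp [Pi.single_apply, ite_smul]
      have h3 : ∑ j, (∑ l, W i l * V l j) • a j = a i := by
        calc ∑ j, (∑ l, W i l * V l j) • a j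
            = ∑ j, ∑ l, (W i l * V l j) * a j := by
              simp_rw [smul_eq_mul, Finset.sum_mul]
          _ = ∑ l, ∑ j, W i l * (V l j * a j) := by
              rw [Finset.sum_comm]; simp_rw [mul_assoc]
          _ = ∑ l, W i l * (∑ j, V l j * a j) := by simp_rw [← Finset.mul_sum]
          _ = ∑ l, W i l * b l := by
              refine Finset.sum_congr rfl fun l _ => ?_
              have := hV l; simp_rw [smul_eq_mul] at this; rw [this]
          _ = a i := by have := hW i; simp_rw [smul_eq_mul] at this; rw [this]
      show ∑ j, c j • a j = 0
      simp only [hc]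
      rw [h1, h2, h3, sub_self]
    have hsplit : (Pi.single i 1 : Fin m → IsLocalRing.ResidueField Q)
        = p c + ∑ l, π (W i l) • vbar l := by
      funext j
      have hsj : π ((Pi.single i 1 : Fin m → Q) j)
          = (Pi.single i 1 : Fin m → IsLocalRing.ResidueField Q) j := by
        simp [Pi.single_apply, apply_ite π]
      rw [← hsj]
      show π ((Pi.single i 1 : Fin m → Q) j) = π (c j) + (∑ l, π (W i l) • vbar l) j
      have h4 : (∑ l, π (W i l) • vbar l) j = ∑ l, π (W i l) * π (V l j) := by
        rw [Finset.sum_apply]; rfl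
      rw [h4]
      simp only [hc]
      rw [map_sub, map_sum]
      simp_rw [_root_.map_mul]
      ring
    rw [hsplit]
    refine Submodule.add_mem _ ?_ ?_
    · exact Submodule.mem_sup_left (Submodule.mem_map_of_mem hcK)
    · exact Submodule.mem_sup_right (Submodule.sum_mem _ fun l _ =>
        Submodule.smul_mem _ _ (Submodule.subset_span ⟨l, rfl⟩))
  obtain ⟨u, hu, hUnit⟩ := aux_exists_unit_rows S vbar hs
  choose c' hc'K hc'p using fun i => Submodule.mem_map.1 (hu i)
  refine ⟨Matrix.of (fun i j => V i j + c' i j), ?_, ?_⟩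
  · -- invertibility: the reduction of U is the invertible matrix `of u`
    have hmap : (Matrix.of (fun i j => V i j + c' i j)).map π = Matrix.of u := by
      ext i j
      have := congrFun (hc'p i) j
      show π (V i j + c' i j) = u i j
      rw [map_add]
      have hπc : π (c' i j) = u i j - vbar i j := this
      have hv : π (V i j) = vbar i j := rfl
      rw [hπc, hv]; ring
    have hdet : IsUnit (π ((Matrix.of (fun i j => V i j + c' i j)).det)) := by
      rw [RingHom.map_det, RingHom.mapMatrix_apply, hmap]
      exact (Matrix.isUnit_iff_isUnit_det _).1 hUnit
    have : (Matrix.of (fun i j => V i j + c' i j)).det ∉ IsLocalRing.maximalIdeal Q := by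
      intro hmem
      have : π ((Matrix.of (fun i j => V i j + c' i j)).det) = 0 :=
        (Ideal.Quotient.eq_zero_iff_mem).2 hmem
      rw [this] at hdet
      exact hdet.ne_zero rfl
    rw [Matrix.isUnit_iff_isUnit_det]
    exact IsLocalRing.notMem_maximalIdeal.1 this
  · funext i
    show b i = ∑ j, (V i j + c' i j) * a j
    have hrel : ∑ j, c' i j • a j = 0 := by
      have := hc'K i
      rwa [LinearMap.mem_ker, Fintype.linearCombination_apply] at this
    have : ∑ j, (V i j + c' i j) * a j = (∑ j, V i j * a j) + ∑ j, c' i j * a j := by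
      rw [← Finset.sum_add_distrib]
      exact Finset.sum_congr rfl fun j _ => by ring
    rw [this]
    have h1 := hV i; simp_rw [smul_eq_mul] at h1
    simp_rw [smul_eq_mul] at hrel
    rw [h1, hrel, add_zero]
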